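/- Let k, n be integers with 0 ≤ k ≤ n and let I ≤ J in the Gale order on k-element subsets of [n]. Then the collection B = {S ∈ binom([n],k) : I ≤ S ≤ J in Gale order} is the set of bases of a matroid on [n] (a lattice path matroid). -/

import Mathlib

/-- Gale order on `k`-element subsets of `[n]`: `S ≤ T` iff they have the same size and,
writing `S = {s₁ < … < s_k}` and `T = {t₁ < … < t_k}`, we have `sᵢ ≤ tᵢ` for all `i`. -/
def GaleLE {n : ℕ} (S T : Finset (Fin n)) : Prop :=
  S.card = T.card ∧
  ∀ (m : ℕ) (hS : m < (S.sort (· ≤ ·)).length) (hT : m < (T.sort (· ≤ ·)).length),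
    (S.sort (· ≤ ·)).get ⟨m, hS⟩ ≤ (T.sort (· ≤ ·)).get ⟨m, hT⟩

namespace GaleAux

variable {n : ℕ}

/-- number of elements of `S` with value `< a`. -/
def f (S : Finset (Fin n)) (a : ℕ) : ℕ := (S.filter (fun x : Fin n => x.val < a)).card

lemma f_le_card (S : Finset (Fin n)) (a : ℕ) : f S a ≤ S.card := Finset.card_filter_le _ _

lemma get_lt_iff (l : List (Fin n)) (hl : l.Pairwise (· < ·)) (a : ℕ) :
    ∀ (m : ℕ) (hm : m < l.length),
      ((l.get ⟨m, hm⟩).val < a ↔ m < (l.filter (fun x : Fin n => decide (x.val < a))).length) := by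
  induction l with
  | nil => intro m hm; simp at hm
  | cons x xs ih =>
    have hx : ∀ y ∈ xs, x < y := (List.pairwise_cons.mp hl).1
    have hxs : xs.Pairwise (· < ·) := (List.pairwise_cons.mp hl).2
    intro m hm
    rcases m with _ | m
    · simp only [List.get, List.filter_cons]
      constructor
      · intro h
        simp [h]
      · intro h
        by_contra hlt
        have hall : ∀ y ∈ xs, ¬ (y.val < a) := by
          intro y hy
          have := hx y hy
          have : x.val < y.val := this
          omega
        rw [if_neg (by simpa using hlt)] at h
        rw [List.filter_eq_nil_iff.mpr (by intro y hy; simpa using hall y hy)] at h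
        simp at h
    · have hm' : m < xs.length := by simpa using Nat.lt_of_succ_lt_succ hm
      have hiff := ih hxs m hm'
      simp only [List.get, List.filter_cons]
      by_cases hxa : x.val < a
      · rw [if_pos (by simpa using hxa)]
        simpa [Nat.succ_lt_succ_iff] using hiff
      · rw [if_neg (by simpa using hxa)]
        have hall : ∀ y ∈ xs, ¬ (y.val < a) := by
          intro y hy
          have : x.val < y.val := hx y hy
          omega
        constructor
        · intro h
          exact absurd h (hall _ (xs.get_mem _))
        · intro h
          rw [List.filter_eq_nil_iff.mpr (by intro y hy; simpa using hall y hy)] at h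
          simp at h

lemma f_eq_length_filter (S : Finset (Fin n)) (a : ℕ) :
    f S a = ((S.sort (· ≤ ·)).filter (fun x : Fin n => decide (x.val < a))).length := by
  have h1 : ((S.sort (· ≤ ·) : List (Fin n)) : Multiset (Fin n)) = S.1 := Finset.sort_eq _ _
  have h2 : f S a = Multiset.card (Multiset.filter (fun x : Fin n => x.val < a) S.1) := by
    simp [f, Finset.card, Finset.filter_val]
  rw [h2, ← h1, Multiset.filter_coe, Multiset.coe_card]

lemma sort_get_lt_iff (S : Finset (Fin n)) (a : ℕ) (m : ℕ) (hm : m < (S.sort (· ≤ ·)).length) :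
    ((S.sort (· ≤ ·)).get ⟨m, hm⟩).val < a ↔ m < f S a := by
  rw [f_eq_length_filter]
  exact get_lt_iff _ (Finset.sortedLT_sort S).pairwise a m hm

lemma gale_iff (S T : Finset (Fin n)) :
    GaleLE S T ↔ S.card = T.card ∧ ∀ a : ℕ, f T a ≤ f S a := by
  constructor
  · rintro ⟨hc, h⟩
    refine ⟨hc, fun a => ?_⟩
    by_contra hlt
    push_neg at hlt
    have hmT : f S a < (T.sort (· ≤ ·)).length := by
      rw [Finset.length_sort]
      exact lt_of_lt_of_le hlt (f_le_card T a)
    have hmS : f S a < (S.sort (· ≤ ·)).length := by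
      rw [Finset.length_sort, hc, ← Finset.length_sort (· ≤ ·)]
      exact hmT
    have h1 : ((T.sort (· ≤ ·)).get ⟨f S a, hmT⟩).val < a :=
      (sort_get_lt_iff T a _ hmT).mpr hlt
    have h2 : ((S.sort (· ≤ ·)).get ⟨f S a, hmS⟩).val < a :=
      lt_of_le_of_lt (h _ hmS hmT) h1
    exact absurd ((sort_get_lt_iff S a _ hmS).mp h2) (lt_irrefl _)
  · rintro ⟨hc, h⟩
    refine ⟨hc, fun m hS hT => ?_⟩
    by_contra hlt
    push_neg at hlt
    have h1 : ((T.sort (· ≤ ·)).get ⟨m, hT⟩).val < ((S.sort (· ≤ ·)).get ⟨m, hS⟩).val := hlt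
    have h2 : m < f T (((S.sort (· ≤ ·)).get ⟨m, hS⟩).val) := (sort_get_lt_iff T _ m hT).mp h1
    have h3 : m < f S (((S.sort (· ≤ ·)).get ⟨m, hS⟩).val) := lt_of_lt_of_le h2 (h _)
    have := (sort_get_lt_iff S _ m hS).mpr h3
    omega


lemma f_zero (S : Finset (Fin n)) : f S 0 = 0 := by simp [f]

lemma f_all (S : Finset (Fin n)) {a : ℕ} (ha : n ≤ a) : f S a = S.card := by
  unfold f
  rw [Finset.filter_true_of_mem (fun x _ => lt_of_lt_of_le x.isLt ha)]

lemma f_succ (S : Finset (Fin n)) (x : Fin n) :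
    f S (x.val + 1) = f S x.val + (if x ∈ S then 1 else 0) := by
  classical
  have hpred : ∀ y ∈ S, (y.val < x.val + 1) ↔ (y.val < x.val ∨ y = x) := by
    intro y _
    constructor
    · intro h
      rcases Nat.lt_succ_iff_lt_or_eq.mp h with h | h
      · exact Or.inl h
      · exact Or.inr (Fin.ext h)
    · rintro (h | rfl)
      · omega
      · omega
  unfold f
  rw [Finset.filter_congr hpred, Finset.filter_or,
    Finset.card_union_of_disjoint, Finset.filter_eq']
  · split_ifs with h <;> simp
  · rw [Finset.disjoint_left]
    intro y hy1 hy2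
    have h1 : y.val < x.val := by simpa using (Finset.mem_filter.mp hy1).2
    have h2 : y = x := (Finset.mem_filter.mp hy2).2
    omega

lemma f_insert (S : Finset (Fin n)) (x : Fin n) (hx : x ∉ S) (a : ℕ) :
    f (insert x S) a = f S a + (if x.val < a then 1 else 0) := by
  classical
  unfold f
  rw [Finset.filter_insert]
  split_ifs with h
  · rw [Finset.card_insert_of_notMem (by simp [hx])]
  · rfl

lemma f_erase (S : Finset (Fin n)) (x : Fin n) (hx : x ∈ S) (a : ℕ) :
    f S a = f (S.erase x) a + (if x.val < a then 1 else 0) := by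
  classical
  conv_lhs => rw [← Finset.insert_erase hx]
  exact f_insert _ _ (Finset.notMem_erase _ _) a

def IsB (I J : Finset (Fin n)) (k : ℕ) (S : Finset (Fin n)) : Prop :=
  S.card = k ∧ ∀ a : ℕ, f J a ≤ f S a ∧ f S a ≤ f I a

lemma isB_swap (I J : Finset (Fin n)) (k : ℕ) (B : Finset (Fin n))
    (hB : IsB I J k B) (b : Fin n) (hb : b ∈ B) (x : Fin n) (hx : x ∉ B)
    (hbound : ∀ a : ℕ, f J a ≤ f (B.erase b) a + (if x.val < a then 1 else 0) ∧
      f (B.erase b) a + (if x.val < a then 1 else 0) ≤ f I a) :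
    IsB I J k (insert x (B.erase b)) := by
  classical
  have hk1 : 1 ≤ k := by
    have := Finset.card_pos.mpr ⟨b, hb⟩
    have hc := hB.1
    omega
  constructor
  · rw [Finset.card_insert_of_notMem (fun h => hx (Finset.mem_of_mem_erase h)),
      Finset.card_erase_of_mem hb, hB.1]
    omega
  · intro a
    rw [f_insert _ _ (fun h => hx (Finset.mem_of_mem_erase h))]
    exact hbound a

lemma exists_min (P : ℕ → Prop) (h : ∃ a, P a) :
    ∃ v, P v ∧ ∀ m, m < v → ¬ P m := by
  classical
  exact ⟨Nat.find h, Nat.find_spec h, fun m hm => Nat.find_min h hm⟩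

lemma exchange (I J : Finset (Fin n)) (k : ℕ)
    (B B' : Finset (Fin n)) (hB : IsB I J k B) (hB' : IsB I J k B')
    (b : Fin n) (hbB : b ∈ B) (hbB' : b ∉ B') :
    ∃ b' : Fin n, b' ∈ B' ∧ b' ∉ B ∧ IsB I J k (insert b' (B.erase b)) := by
  classical
  obtain ⟨hBc, hBf⟩ := hB
  obtain ⟨hB'c, hB'f⟩ := hB'
  have hβn : b.val < n := b.isLt
  have e1 := f_succ B b
  have e2 := f_succ B' b
  rw [if_pos hbB] at e1
  rw [if_neg hbB'] at e2
  rcases Nat.lt_or_ge (f B b.val) (f B' b.val) with hcase | hcase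
  · -- Case α : more B'-elements below b; swap down
    have hβpos : b.val ≠ 0 := by
      intro h
      rw [h, f_zero, f_zero] at hcase
      omega
    have hP : ∃ a, a < b.val ∧ ∀ c, a < c → c ≤ b.val → f B c < f B' c := by
      refine ⟨b.val - 1, by omega, fun c h1 h2 => ?_⟩
      have : c = b.val := by omega
      rw [this]
      exact hcase
    obtain ⟨a₀, ⟨ha₀β, hchain⟩, hmin⟩ := exists_min _ hP
    have hle : f B' a₀ ≤ f B a₀ := by
      rcases Nat.eq_zero_or_pos a₀ with h | h
      · rw [h, f_zero, f_zero]
      · have hm := hmin (a₀ - 1) (by omega)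
        push_neg at hm
        obtain ⟨c, hc1, hc2, hc3⟩ := hm (by omega)
        rcases Nat.lt_or_ge a₀ c with h4 | h4
        · exact absurd (hchain c h4 hc2) (by omega)
        · have : c = a₀ := by omega
          rwa [this] at hc3
    have hjump : f B (a₀ + 1) < f B' (a₀ + 1) := hchain (a₀ + 1) (by omega) (by omega)
    set x₀ : Fin n := ⟨a₀, by omega⟩ with hx₀def
    have g1 := f_succ B x₀
    have g2 := f_succ B' x₀
    have hval : x₀.val = a₀ := rfl
    rw [hval] at g1 g2
    have hkey : x₀ ∈ B' ∧ x₀ ∉ B := by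
      by_cases hxB : x₀ ∈ B <;> by_cases hxB' : x₀ ∈ B' <;>
        simp only [hxB, hxB', if_true, if_false] at g1 g2 <;>
        first
          | exact ⟨hxB', hxB⟩
          | omega
    refine ⟨x₀, hkey.1, hkey.2, isB_swap I J k B ⟨hBc, hBf⟩ b hbB x₀ hkey.2 fun a => ?_⟩
    obtain ⟨hj, hi⟩ := hBf a
    obtain ⟨hj', hi'⟩ := hB'f a
    have hBa := f_erase B b hbB a
    rcases Nat.lt_or_ge a₀ a with h1 | h1
    · rcases Nat.lt_or_ge b.val a with h2 | h2
      · rw [if_pos (show x₀.val < a by omega)]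
        rw [if_pos (show b.val < a by omega)] at hBa
        exact ⟨by omega, by omega⟩
      · have hmid := hchain a h1 h2
        rw [if_pos (show x₀.val < a by omega)]
        rw [if_neg (show ¬ b.val < a by omega)] at hBa
        exact ⟨by omega, by omega⟩
    · rw [if_neg (show ¬ x₀.val < a by omega)]
      rw [if_neg (show ¬ b.val < a by omega)] at hBa
      exact ⟨by omega, by omega⟩
  · -- Case β : swap up
    have hdrop : f B' (b.val + 1) < f B (b.val + 1) := by omega
    have hβ1n : b.val + 1 < n := by
      rcases Nat.lt_or_ge (b.val + 1) n with h | h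
      · exact h
      · exfalso
        rw [f_all B h, f_all B' h, hBc, hB'c] at hdrop
        omega
    have hP : ∃ a, b.val < a ∧ f B (a + 1) ≤ f B' (a + 1) := by
      refine ⟨n - 1, by omega, ?_⟩
      rw [show n - 1 + 1 = n by omega, f_all B (le_refl n), f_all B' (le_refl n), hBc, hB'c]
    obtain ⟨v, ⟨hβv, hvle⟩, hmin⟩ := exists_min _ hP
    have hvn : v < n := by
      rcases Nat.lt_or_ge v n with h | h
      · exact h
      · exfalso
        have := hmin (n - 1) (by omega)
        push_neg at this
        have h2 := this (by omega)
        rw [show n - 1 + 1 = n by omega, f_all B (le_refl n), f_all B' (le_refl n),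
          hBc, hB'c] at h2
        omega
    have hchain : ∀ c, b.val < c → c ≤ v → f B' c < f B c := by
      intro c h1 h2
      rcases Nat.eq_or_lt_of_le (show b.val + 1 ≤ c by omega) with h3 | h3
      · rw [← h3]; exact hdrop
      · have hm := hmin (c - 1) (by omega)
        push_neg at hm
        have := hm (by omega)
        rwa [show c - 1 + 1 = c by omega] at this
    have hjv : f B' v < f B v := hchain v hβv (le_refl v)
    set x₁ : Fin n := ⟨v, hvn⟩ with hx₁def
    have g1 := f_succ B x₁
    have g2 := f_succ B' x₁
    have hval : x₁.val = v := rfl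
    rw [hval] at g1 g2
    have hkey : x₁ ∈ B' ∧ x₁ ∉ B := by
      by_cases hxB : x₁ ∈ B <;> by_cases hxB' : x₁ ∈ B' <;>
        simp only [hxB, hxB', if_true, if_false] at g1 g2 <;>
        first
          | exact ⟨hxB', hxB⟩
          | omega
    refine ⟨x₁, hkey.1, hkey.2, isB_swap I J k B ⟨hBc, hBf⟩ b hbB x₁ hkey.2 fun a => ?_⟩
    obtain ⟨hj, hi⟩ := hBf a
    obtain ⟨hj', hi'⟩ := hB'f a
    have hBa := f_erase B b hbB a
    rcases Nat.lt_or_ge b.val a with h1 | h1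
    · rcases Nat.lt_or_ge v a with h2 | h2
      · rw [if_pos (show x₁.val < a by omega)]
        rw [if_pos (show b.val < a by omega)] at hBa
        exact ⟨by omega, by omega⟩
      · have hmid := hchain a h1 h2
        rw [if_neg (show ¬ x₁.val < a by omega)]
        rw [if_pos (show b.val < a by omega)] at hBa
        exact ⟨by omega, by omega⟩
    · rw [if_neg (show ¬ x₁.val < a by omega)]
      rw [if_neg (show ¬ b.val < a by omega)] at hBa
      exact ⟨by omega, by omega⟩


end GaleAux

/-- For `I ≤ J` in the Gale order on `k`-subsets of `[n]`, the Gale-order interval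
`{S : I ≤ S ≤ J}` is the set of bases of a matroid on `[n]` (a lattice path matroid). -/


theorem gale_interval_is_matroid (n k : ℕ) (hk : k ≤ n)
    (I J : Finset (Fin n)) (hI : I.card = k) (hJ : J.card = k) (hIJ : GaleLE I J) :
    ∃ M : Matroid (Fin n), M.E = Set.univ ∧
      ∀ X : Set (Fin n), M.IsBase X ↔
        ∃ S : Finset (Fin n), ↑S = X ∧ S.card = k ∧ GaleLE I S ∧ GaleLE S J := by
  classical
  have hbase_iff : ∀ S : Finset (Fin n),
      (S.card = k ∧ GaleLE I S ∧ GaleLE S J) ↔ GaleAux.IsB I J k S := by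
    intro S
    constructor
    · rintro ⟨hc, h1, h2⟩
      obtain ⟨-, h1'⟩ := (GaleAux.gale_iff I S).mp h1
      obtain ⟨-, h2'⟩ := (GaleAux.gale_iff S J).mp h2
      exact ⟨hc, fun a => ⟨h2' a, h1' a⟩⟩
    · rintro ⟨hc, h⟩
      exact ⟨hc, (GaleAux.gale_iff I S).mpr ⟨hI.trans hc.symm, fun a => (h a).2⟩,
        (GaleAux.gale_iff S J).mpr ⟨hc.trans hJ.symm, fun a => (h a).1⟩⟩
  set P : Set (Fin n) → Prop :=
    fun X => ∃ S : Finset (Fin n), ↑S = X ∧ S.card = k ∧ GaleLE I S ∧ GaleLE S J with hPdef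
  have hPI : P ↑I := ⟨I, rfl, hI, ⟨rfl, fun m hS hT => le_refl _⟩, hIJ⟩
  have hex : Matroid.ExchangeProperty P := by
    intro X Y hX hY a ha
    obtain ⟨S, rfl, hSk, hSI, hSJ⟩ := hX
    obtain ⟨T, rfl, hTk, hTI, hTJ⟩ := hY
    have haS : a ∈ S := by simpa using ha.1
    have haT : a ∉ T := by simpa using ha.2
    obtain ⟨b', h1, h2, h3⟩ := GaleAux.exchange I J k S T
      ((hbase_iff S).mp ⟨hSk, hSI, hSJ⟩) ((hbase_iff T).mp ⟨hTk, hTI, hTJ⟩) a haS haT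
    refine ⟨b', ⟨by simpa using h1, by simpa using h2⟩, insert b' (S.erase a), ?_, ?_⟩
    · simp
    · exact (hbase_iff _).mpr h3
  refine ⟨Matroid.ofExistsFiniteIsBase Set.univ P ⟨↑I, hPI, Set.toFinite _⟩ hex
    (fun B _ => Set.subset_univ B), ?_, ?_⟩
  · simp [Matroid.ofExistsFiniteIsBase]
  · intro X
    rw [Matroid.ofExistsFiniteIsBase_isBase]
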